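/- For positive integers n ≤ m₃ ≤ m₀ with m₀ - m₃ ≥ n and m₀, m₃ = Θ(n log n), m₃/m₀ → 2/3, and any K = O(√n), one has ∑_{i=0}^{K} C(n,i)·C(m₀-n, m₃-(n-i)) / C(m₀, m₃) = (2/3 + o(1))^n as n → ∞. In particular, this probability is at most (n log n)^K · ∏_{j=0}^{n-1} (m₃-j)/(m₀-j) and at least ∏_{j=0}^{n-1} (m₃-j)/(m₀-j), and both bounds are (2/3+o(1))^n. -/

import Mathlib

open Filter Finset

private lemma choose_prod_eq (n : ℕ) : ∀ m k : ℕ, n ≤ k → k ≤ m →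
    (m - n).choose (k - n) * ∏ j ∈ range n, (m - j) =
      m.choose k * ∏ j ∈ range n, (k - j) := by
  induction n with
  | zero => simp
  | succ n ih =>
    intro m k hnk hkm
    have e1 : ∏ j ∈ range (n+1), (m - j) = (∏ j ∈ range n, (m - 1 - j)) * m := by
      rw [prod_range_succ']
      congr 1
      exact Finset.prod_congr rfl (fun j _ => by omega)
    have e2 : ∏ j ∈ range (n+1), (k - j) = (∏ j ∈ range n, (k - 1 - j)) * k := by
      rw [prod_range_succ']
      congr 1
      exact Finset.prod_congr rfl (fun j _ => by omega)
    have e3 : m - (n+1) = (m-1) - n := by omega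
    have e4 : k - (n+1) = (k-1) - n := by omega
    have ih' := ih (m-1) (k-1) (by omega) (by omega)
    have key : m * ((m-1).choose (k-1)) = m.choose k * k := by
      have := Nat.add_one_mul_choose_eq (m-1) (k-1)
      have hm : (m-1) + 1 = m := by omega
      have hk : (k-1) + 1 = k := by omega
      rwa [hm, hk] at this
    rw [e1, e2, e3, e4, ← mul_assoc, ih']
    calc (m-1).choose (k-1) * (∏ j ∈ range n, (k - 1 - j)) * m
        = (m * (m-1).choose (k-1)) * ∏ j ∈ range n, (k - 1 - j) := by ring
      _ = (m.choose k * k) * ∏ j ∈ range n, (k - 1 - j) := by rw [key]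
      _ = m.choose k * ((∏ j ∈ range n, (k - 1 - j)) * k) := by ring

private lemma choose_ratio_real {n m k : ℕ} (hnk : n ≤ k) (hkm : k ≤ m) :
    ((m - n).choose (k - n) : ℝ) / (m.choose k : ℝ) =
      ∏ j ∈ range n, ((k : ℝ) - j) / ((m : ℝ) - j) := by
  have H := choose_prod_eq n m k hnk hkm
  have hpos : 0 < (m.choose k : ℝ) := by exact_mod_cast Nat.choose_pos hkm
  have ek : ∀ j ∈ range n, ((k:ℝ) - j) = ((k - j : ℕ) : ℝ) := by
    intro j hj; simp only [mem_range] at hj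
    rw [Nat.cast_sub (by omega)]
  have em : ∀ j ∈ range n, ((m:ℝ) - j) = ((m - j : ℕ) : ℝ) := by
    intro j hj; simp only [mem_range] at hj
    rw [Nat.cast_sub (by omega)]
  have hmpos : (0:ℝ) < ∏ j ∈ range n, ((m:ℝ) - j) := by
    apply Finset.prod_pos
    intro j hj; simp only [mem_range] at hj
    have : (j:ℝ) < m := by exact_mod_cast (by omega : j < m)
    linarith
  rw [prod_div_distrib, div_eq_div_iff hpos.ne' hmpos.ne',
    Finset.prod_congr rfl ek, Finset.prod_congr rfl em, ← Nat.cast_prod, ← Nat.cast_prod]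
  exact_mod_cast H.trans (Nat.mul_comm _ _)

/-- For `n ≤ m₃ ≤ m₀` with `m₀ - m₃ ≥ n`, `m₀, m₃ = Θ(n log n)`, `m₃/m₀ → 2/3`,
and `K = O(√n)`, the probability that a uniformly random `m₃`-subset of `[m₀]`
contains all but at most `K` elements of a fixed `n`-set, namely
`S n = ∑_{i=0}^{K} C(n,i)·C(m₀-n, m₃-(n-i)) / C(m₀,m₃)`, satisfies
`Pr n ≤ S n ≤ (n log n)^K · Pr n` (eventually) where `Pr n = ∏_{j<n} (m₃-j)/(m₀-j)`,
and `S n = (2/3 + o(1))^n`. -/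
theorem almost_containment_probability (m₀ m₃ K : ℕ → ℕ)
    (hle : ∀ n, n ≤ m₃ n ∧ m₃ n ≤ m₀ n ∧ n ≤ m₀ n - m₃ n)
    (hm₀ : ∃ c C : ℝ, 0 < c ∧ ∀ᶠ n : ℕ in atTop,
      c * ((n : ℝ) * Real.log n) ≤ (m₀ n : ℝ) ∧ (m₀ n : ℝ) ≤ C * ((n : ℝ) * Real.log n))
    (hm₃ : ∃ c C : ℝ, 0 < c ∧ ∀ᶠ n : ℕ in atTop,
      c * ((n : ℝ) * Real.log n) ≤ (m₃ n : ℝ) ∧ (m₃ n : ℝ) ≤ C * ((n : ℝ) * Real.log n))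
    (hratio : Tendsto (fun n => (m₃ n : ℝ) / (m₀ n : ℝ)) atTop (nhds (2 / 3)))
    (hK : ∃ C : ℝ, ∀ n, (K n : ℝ) ≤ C * Real.sqrt n)
    (S Pr : ℕ → ℝ)
    (hS : ∀ n, S n = (∑ i ∈ Finset.range (K n + 1),
        ((n.choose i : ℝ) * ((m₀ n - n).choose (m₃ n - (n - i)) : ℝ)))
          / ((m₀ n).choose (m₃ n) : ℝ))
    (hPr : ∀ n, Pr n = ∏ j ∈ Finset.range n, ((m₃ n : ℝ) - j) / ((m₀ n : ℝ) - j)) :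
    (∀ᶠ n : ℕ in atTop,
        Pr n ≤ S n ∧ S n ≤ ((n : ℝ) * Real.log n) ^ (K n) * Pr n)
    ∧ ∃ ε : ℕ → ℝ, Tendsto ε atTop (nhds 0) ∧
        ∀ᶠ n : ℕ in atTop, S n = (2 / 3 + ε n) ^ n := by
  obtain ⟨c₀, C₀, hc₀, hm₀'⟩ := hm₀
  obtain ⟨CK, hCK⟩ := hK
  -- basic positivity facts
  have hcp : ∀ n, (0:ℝ) < ((m₀ n).choose (m₃ n) : ℝ) := fun n => by
    exact_mod_cast Nat.choose_pos (hle n).2.1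
  have hPrEq : ∀ n, Pr n =
      (((m₀ n - n).choose (m₃ n - n) : ℝ)) / ((m₀ n).choose (m₃ n) : ℝ) := fun n => by
    rw [hPr n, ← choose_ratio_real (hle n).1 (hle n).2.1]
  have hPrpos : ∀ n, 0 < Pr n := by
    intro n
    rw [hPr n]
    apply Finset.prod_pos
    intro j hj
    simp only [mem_range] at hj
    have h1 : (j:ℝ) < m₃ n := by exact_mod_cast lt_of_lt_of_le hj (hle n).1
    have h2 : (j:ℝ) < m₀ n := by
      exact_mod_cast lt_of_lt_of_le hj (le_trans (hle n).1 (hle n).2.1)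
    exact div_pos (by linarith) (by linarith)
  -- lower bound for all n
  have hlow : ∀ n, Pr n ≤ S n := by
    intro n
    rw [hS n, hPrEq n]
    gcongr
    calc ((m₀ n - n).choose (m₃ n - n) : ℝ)
        = (n.choose 0 : ℝ) * ((m₀ n - n).choose (m₃ n - (n - 0)) : ℝ) := by simp
      _ ≤ _ := by
          apply Finset.single_le_sum (f := fun i =>
            ((n.choose i : ℝ) * ((m₀ n - n).choose (m₃ n - (n - i)) : ℝ)))
          · intro i _; positivity
          · simp
  -- log n → ∞
  have hlogT : Tendsto (fun n : ℕ => Real.log n) atTop atTop :=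
    Real.tendsto_log_atTop.comp tendsto_natCast_atTop_atTop
  have hm0pos : ∀ᶠ n : ℕ in atTop, (0:ℝ) < (m₀ n : ℝ) := by
    filter_upwards [hm₀', hlogT.eventually_gt_atTop 0,
      eventually_gt_atTop 0] with n h1 h2 h3
    have hn : (0:ℝ) < n := by exact_mod_cast h3
    have h5 : 0 < c₀ * ((n:ℝ) * Real.log n) := mul_pos hc₀ (mul_pos hn h2)
    linarith [h1.1]
  -- n / m₀ n → 0
  have hn0 : Tendsto (fun n : ℕ => (n : ℝ) / (m₀ n : ℝ)) atTop (nhds 0) := by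
    have hinv : Tendsto (fun n : ℕ => (c₀ * Real.log n)⁻¹) atTop (nhds 0) :=
      (hlogT.const_mul_atTop hc₀).inv_tendsto_atTop
    apply tendsto_of_tendsto_of_tendsto_of_le_of_le' tendsto_const_nhds hinv
    · filter_upwards [hm0pos] with n h
      positivity
    · filter_upwards [hm₀', hlogT.eventually_gt_atTop 0, hm0pos,
        eventually_gt_atTop 0] with n h1 h2 h3 h4
      have hn : (0:ℝ) < n := by exact_mod_cast h4
      rw [show ((c₀ * Real.log (n:ℕ))⁻¹ : ℝ) = (n:ℝ) / (c₀ * ((n:ℝ) * Real.log n)) by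
        field_simp]
      have h6 : 0 < c₀ * ((n:ℝ) * Real.log n) := mul_pos hc₀ (mul_pos hn h2)
      gcongr
      exact h1.1
  -- eventually m₀ + n ≤ 2 m₃ (in ℕ)
  have hE1 : ∀ᶠ n : ℕ in atTop, m₀ n + n ≤ 2 * m₃ n := by
    filter_upwards [hratio.eventually (eventually_ge_nhds (by norm_num : (3/5:ℝ) < 2/3)),
      hn0.eventually (eventually_le_nhds (by norm_num : (0:ℝ) < 1/5)),
      hm0pos] with n h1 h2 h3
    have hr1 : (3/5:ℝ) * (m₀ n) ≤ m₃ n := by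
      rw [le_div_iff₀ h3] at h1; linarith
    have hr2 : (n:ℝ) ≤ (1/5) * (m₀ n) := by
      rw [div_le_iff₀ h3] at h2; linarith
    have : ((m₀ n : ℝ) + n) ≤ 2 * (m₃ n) := by linarith
    exact_mod_cast this
  -- limit of (m₃ - n)/m₀
  have ha : Tendsto (fun n : ℕ => ((m₃ n : ℝ) - n) / (m₀ n : ℝ)) atTop (nhds (2/3)) := by
    have := hratio.sub hn0
    rw [sub_zero] at this
    apply this.congr'
    filter_upwards [hm0pos] with n h
    rw [sub_div]
  -- limit of m₃/(m₀ - n)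
  have hb : Tendsto (fun n : ℕ => (m₃ n : ℝ) / ((m₀ n : ℝ) - n)) atTop (nhds (2/3)) := by
    have h1 : Tendsto (fun n : ℕ => 1 - (n:ℝ) / (m₀ n : ℝ)) atTop (nhds 1) := by
      have := (tendsto_const_nhds (x := (1:ℝ)) (f := atTop (α := ℕ))).sub hn0
      rwa [sub_zero] at this
    have h2 := hratio.div h1 one_ne_zero
    rw [div_one] at h2
    apply h2.congr'
    filter_upwards [hm0pos] with n h
    have : (m₀ n : ℝ) * (1 - (n:ℝ)/(m₀ n)) = (m₀ n : ℝ) - n := by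
      field_simp
    show (m₃ n : ℝ) / (m₀ n) / (1 - (n:ℝ)/(m₀ n)) = _
    rw [div_div, this]
  -- eventual upper bound
  have hup : ∀ᶠ n : ℕ in atTop, S n ≤ ((n:ℝ) * Real.log n) ^ (K n) * Pr n := by
    filter_upwards [hE1, hlogT.eventually_ge_atTop 2, eventually_ge_atTop 1]
      with n hE hlog2 hn1
    obtain ⟨ha1, ha2, ha3⟩ := hle n
    have mono : ∀ i, (m₀ n - n).choose (m₃ n - n + i) ≤ (m₀ n - n).choose (m₃ n - n) := by
      intro i
      induction i with
      | zero => simp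
      | succ i ih =>
        have hd : (m₀ n - n) - (m₃ n - n + i) ≤ (m₃ n - n + i) + 1 := by omega
        have h := Nat.choose_succ_right_eq (m₀ n - n) (m₃ n - n + i)
        have h2 : (m₀ n - n).choose (m₃ n - n + i + 1) * (m₃ n - n + i + 1)
            ≤ (m₀ n - n).choose (m₃ n - n + i) * (m₃ n - n + i + 1) := by
          rw [h]; exact Nat.mul_le_mul_left _ hd
        have h3 := Nat.le_of_mul_le_mul_right h2 (Nat.succ_pos _)
        calc (m₀ n - n).choose (m₃ n - n + (i+1))
            = (m₀ n - n).choose (m₃ n - n + i + 1) := by rw [← add_assoc]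
          _ ≤ (m₀ n - n).choose (m₃ n - n + i) := h3
          _ ≤ (m₀ n - n).choose (m₃ n - n) := ih
    have hnum : (∑ i ∈ range (K n + 1), (n.choose i) * ((m₀ n - n).choose (m₃ n - (n - i))))
        ≤ (K n + 1) * (n ^ (K n) * (m₀ n - n).choose (m₃ n - n)) := by
      calc ∑ i ∈ range (K n + 1), (n.choose i) * ((m₀ n - n).choose (m₃ n - (n - i)))
          ≤ ∑ _i ∈ range (K n + 1), n ^ (K n) * (m₀ n - n).choose (m₃ n - n) := by
            apply Finset.sum_le_sum
            intro i hi
            simp only [mem_range] at hi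
            by_cases hin : i ≤ n
            · have e : m₃ n - (n - i) = m₃ n - n + i := by omega
              rw [e]
              exact Nat.mul_le_mul
                (le_trans (Nat.choose_le_pow n i) (Nat.pow_le_pow_right hn1 (by omega)))
                (mono i)
            · have h0 : n.choose i = 0 := Nat.choose_eq_zero_of_lt (by omega)
              simp [h0]
        _ = (K n + 1) * (n ^ (K n) * (m₀ n - n).choose (m₃ n - n)) := by
            rw [Finset.sum_const, card_range, smul_eq_mul]
    -- cast to ℝ
    have hnumR : (∑ i ∈ range (K n + 1),
          ((n.choose i : ℝ) * ((m₀ n - n).choose (m₃ n - (n - i)) : ℝ)))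
        ≤ ((K n : ℝ) + 1) * ((n:ℝ) ^ (K n) * ((m₀ n - n).choose (m₃ n - n) : ℝ)) := by
      have := hnum
      push_cast at this ⊢
      exact_mod_cast this
    have hcoef : ((K n : ℝ) + 1) * (n:ℝ) ^ (K n) ≤ ((n:ℝ) * Real.log n) ^ (K n) := by
      rw [mul_pow]
      have h1 : ((K n : ℝ) + 1) ≤ 2 ^ (K n) := by
        exact_mod_cast Nat.succ_le_of_lt ((Nat.lt_two_pow_self (n := K n)))
      have h2 : (2:ℝ) ^ (K n) ≤ (Real.log n) ^ (K n) :=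
        pow_le_pow_left₀ (by norm_num) hlog2 _
      have hn0' : (0:ℝ) ≤ (n:ℝ) ^ (K n) := by positivity
      calc ((K n : ℝ) + 1) * (n:ℝ) ^ (K n)
            ≤ 2 ^ (K n) * (n:ℝ) ^ (K n) := mul_le_mul_of_nonneg_right h1 hn0'
          _ ≤ (Real.log n) ^ (K n) * (n:ℝ) ^ (K n) := mul_le_mul_of_nonneg_right h2 hn0'
          _ = (n:ℝ) ^ (K n) * (Real.log n) ^ (K n) := by ring
    rw [hS n, hPrEq n, div_le_iff₀ (hcp n)]
    calc (∑ i ∈ range (K n + 1),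
          ((n.choose i : ℝ) * ((m₀ n - n).choose (m₃ n - (n - i)) : ℝ)))
        ≤ ((K n : ℝ) + 1) * ((n:ℝ) ^ (K n) * ((m₀ n - n).choose (m₃ n - n) : ℝ)) := hnumR
      _ ≤ ((n:ℝ) * Real.log n) ^ (K n) * ((m₀ n - n).choose (m₃ n - n) : ℝ) := by
          rw [← mul_assoc]
          gcongr
      _ = ((n:ℝ) * Real.log n) ^ (K n) *
            (((m₀ n - n).choose (m₃ n - n) : ℝ) / ((m₀ n).choose (m₃ n) : ℝ))
              * ((m₀ n).choose (m₃ n) : ℝ) := by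
          rw [mul_assoc, div_mul_cancel₀ _ (hcp n).ne']
  refine ⟨by filter_upwards [hup] with n h; exact ⟨hlow n, h⟩, ?_⟩
  -- Part 2
  have hCK0 : (0:ℝ) ≤ CK := by
    have := hCK 1
    simpa using le_trans (Nat.cast_nonneg (K 1)) this
  -- the exponent K n * log(n log n) / n tends to 0
  have hexpo : Tendsto (fun n : ℕ => (K n : ℝ) * Real.log ((n:ℝ) * Real.log n) / n)
      atTop (nhds 0) := by
    have htl : Tendsto (fun n : ℕ => Real.log n / Real.sqrt n) atTop (nhds 0) := by
      have h := (isLittleO_log_rpow_atTop (by norm_num : (0:ℝ) < 1/2)).tendsto_div_nhds_zero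
      have h2 := h.comp (tendsto_natCast_atTop_atTop (R := ℝ))
      apply h2.congr
      intro n
      simp [Real.sqrt_eq_rpow]
    have hub : Tendsto (fun n : ℕ => (2*CK) * (Real.log n / Real.sqrt n)) atTop (nhds 0) := by
      have := htl.const_mul (2*CK)
      rwa [mul_zero] at this
    apply tendsto_of_tendsto_of_tendsto_of_le_of_le' tendsto_const_nhds hub
    · filter_upwards [hlogT.eventually_ge_atTop 2, eventually_ge_atTop 1] with n hlog2 hn1
      have hn : (1:ℝ) ≤ n := by exact_mod_cast hn1
      have hnl : (1:ℝ) ≤ (n:ℝ) * Real.log n := by nlinarith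
      have := Real.log_nonneg hnl
      positivity
    · filter_upwards [hlogT.eventually_ge_atTop 2, eventually_ge_atTop 1] with n hlog2 hn1
      have hn : (1:ℝ) ≤ n := by exact_mod_cast hn1
      have hnpos : (0:ℝ) < n := by linarith
      have hsq : (0:ℝ) < Real.sqrt n := Real.sqrt_pos.mpr hnpos
      have hss : Real.sqrt n * Real.sqrt n = (n:ℝ) := Real.mul_self_sqrt hnpos.le
      have hlogmul : Real.log ((n:ℝ) * Real.log n) ≤ 2 * Real.log n := by
        rw [Real.log_mul (by linarith) (by linarith)]
        have := Real.log_le_self (by linarith : (0:ℝ) ≤ Real.log n)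
        linarith
      have hKn := hCK n
      have hlogpos : (0:ℝ) ≤ Real.log ((n:ℝ) * Real.log n) :=
        Real.log_nonneg (by nlinarith)
      calc (K n : ℝ) * Real.log ((n:ℝ) * Real.log n) / n
          ≤ (CK * Real.sqrt n) * (2 * Real.log n) / n := by
            gcongr
        _ = (2*CK) * (Real.log n / Real.sqrt n) := by
            field_simp
            linear_combination CK * hss
  have hexp1 : Tendsto (fun n : ℕ =>
      Real.exp ((K n : ℝ) * Real.log ((n:ℝ) * Real.log n) / n)) atTop (nhds 1) := by
    have := (Real.continuous_exp.tendsto 0).comp hexpo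
    rwa [Real.exp_zero] at this
  set f : ℕ → ℝ := fun n => S n ^ ((n:ℝ)⁻¹) with hf
  have hS0 : ∀ n, 0 ≤ S n := fun n => ((hPrpos n).trans_le (hlow n)).le
  -- eventual lower bound on f
  have hflow : ∀ᶠ n : ℕ in atTop, ((m₃ n : ℝ) - n) / (m₀ n : ℝ) ≤ f n := by
    filter_upwards [eventually_ge_atTop 1] with n hn1
    obtain ⟨ha1, ha2, ha3⟩ := hle n
    have hm3 : (n:ℝ) ≤ m₃ n := by exact_mod_cast ha1
    have hm03 : (m₃ n : ℝ) ≤ m₀ n := by exact_mod_cast ha2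
    have hgap : (n:ℝ) + m₃ n ≤ m₀ n := by exact_mod_cast (by omega : n + m₃ n ≤ m₀ n)
    have hnR : (1:ℝ) ≤ n := by exact_mod_cast hn1
    have hm0p : (0:ℝ) < m₀ n := by linarith
    have ha0 : (0:ℝ) ≤ ((m₃ n : ℝ) - n) / (m₀ n : ℝ) :=
      div_nonneg (by linarith) hm0p.le
    have key : (((m₃ n : ℝ) - n) / (m₀ n : ℝ)) ^ n ≤ Pr n := by
      rw [hPr n]
      calc (((m₃ n : ℝ) - n) / (m₀ n : ℝ)) ^ n
          = ∏ _j ∈ range n, ((m₃ n : ℝ) - n) / (m₀ n : ℝ) := by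
            rw [prod_const, card_range]
        _ ≤ _ := by
            apply Finset.prod_le_prod (fun j _ => ha0)
            intro j hj
            simp only [mem_range] at hj
            have hjR : (j:ℝ) < n := by exact_mod_cast hj
            have hjd : (0:ℝ) < (m₀ n : ℝ) - j := by linarith
            rw [div_le_div_iff₀ hm0p hjd]
            have hkey : (j:ℝ) * ((m₀ n : ℝ) - m₃ n) ≤ (n:ℝ) * ((m₀ n : ℝ) - j) :=
              mul_le_mul hjR.le (by linarith) (by linarith) (by linarith)
            nlinarith [hkey]
    have h1 : ((((m₃ n : ℝ) - n) / (m₀ n : ℝ)) ^ n) ^ ((n:ℝ)⁻¹) ≤ S n ^ ((n:ℝ)⁻¹) :=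
      Real.rpow_le_rpow (by positivity) (key.trans (hlow n)) (by positivity)
    have hne : ((n:ℕ):ℝ) ≠ 0 := by positivity
    rwa [← Real.rpow_natCast _ n, ← Real.rpow_mul ha0, mul_inv_cancel₀ hne,
      Real.rpow_one] at h1
  -- eventual upper bound on f
  have hfup : ∀ᶠ n : ℕ in atTop,
      f n ≤ Real.exp ((K n : ℝ) * Real.log ((n:ℝ) * Real.log n) / n)
        * ((m₃ n : ℝ) / ((m₀ n : ℝ) - n)) := by
    filter_upwards [eventually_ge_atTop 1, hlogT.eventually_ge_atTop 2, hup]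
      with n hn1 hlog2 hupn
    obtain ⟨ha1, ha2, ha3⟩ := hle n
    have hm3 : (n:ℝ) ≤ m₃ n := by exact_mod_cast ha1
    have hm03 : (m₃ n : ℝ) ≤ m₀ n := by exact_mod_cast ha2
    have hgap : (n:ℝ) + m₃ n ≤ m₀ n := by exact_mod_cast (by omega : n + m₃ n ≤ m₀ n)
    have hnR : (1:ℝ) ≤ n := by exact_mod_cast hn1
    have hm0p : (0:ℝ) < m₀ n := by linarith
    have hdp : (0:ℝ) < (m₀ n : ℝ) - n := by linarith
    have hb0 : (0:ℝ) ≤ (m₃ n : ℝ) / ((m₀ n : ℝ) - n) := div_nonneg (by linarith) hdp.le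
    have hxp : (0:ℝ) < (n:ℝ) * Real.log n := by nlinarith
    have key : Pr n ≤ ((m₃ n : ℝ) / ((m₀ n : ℝ) - n)) ^ n := by
      rw [hPr n]
      calc ∏ j ∈ range n, ((m₃ n : ℝ) - j) / ((m₀ n : ℝ) - j)
          ≤ ∏ _j ∈ range n, (m₃ n : ℝ) / ((m₀ n : ℝ) - n) := by
            apply Finset.prod_le_prod
            · intro j hj
              simp only [mem_range] at hj
              have hjR : (j:ℝ) < n := by exact_mod_cast hj
              exact div_nonneg (by linarith) (by linarith)
            · intro j hj
              simp only [mem_range] at hj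
              have hjR : (j:ℝ) < n := by exact_mod_cast hj
              have hjd : (0:ℝ) < (m₀ n : ℝ) - j := by linarith
              rw [div_le_div_iff₀ hjd hdp]
              nlinarith [mul_nonneg (by linarith : (0:ℝ) ≤ (m₃ n : ℝ) - j)
                (by linarith : (0:ℝ) ≤ (n:ℝ) - j),
                mul_nonneg (by linarith : (0:ℝ) ≤ (j:ℝ))
                (by linarith : (0:ℝ) ≤ (m₀ n : ℝ) - n)]
        _ = ((m₃ n : ℝ) / ((m₀ n : ℝ) - n)) ^ n := by
            rw [prod_const, card_range]
    have hSb : S n ≤ ((n:ℝ) * Real.log n) ^ (K n)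
        * ((m₃ n : ℝ) / ((m₀ n : ℝ) - n)) ^ n := by
      calc S n ≤ ((n:ℝ) * Real.log n) ^ (K n) * Pr n := hupn
        _ ≤ _ := mul_le_mul_of_nonneg_left key (by positivity)
    have h1 : S n ^ ((n:ℝ)⁻¹) ≤ (((n:ℝ) * Real.log n) ^ (K n)
        * ((m₃ n : ℝ) / ((m₀ n : ℝ) - n)) ^ n) ^ ((n:ℝ)⁻¹) :=
      Real.rpow_le_rpow (hS0 n) hSb (by positivity)
    have hne : ((n:ℕ):ℝ) ≠ 0 := by positivity
    have e1 : (((n:ℝ) * Real.log n) ^ (K n)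
        * ((m₃ n : ℝ) / ((m₀ n : ℝ) - n)) ^ n) ^ ((n:ℝ)⁻¹)
        = Real.exp ((K n : ℝ) * Real.log ((n:ℝ) * Real.log n) / n)
          * ((m₃ n : ℝ) / ((m₀ n : ℝ) - n)) := by
      rw [Real.mul_rpow (by positivity) (by positivity)]
      congr 1
      · rw [← Real.rpow_natCast ((n:ℝ) * Real.log n) (K n), ← Real.rpow_mul hxp.le,
          Real.rpow_def_of_pos hxp]
        congr 1
        ring
      · rw [← Real.rpow_natCast _ n, ← Real.rpow_mul hb0, mul_inv_cancel₀ hne,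
          Real.rpow_one]
    rw [e1] at h1
    exact h1
  -- squeeze
  have hg : Tendsto (fun n : ℕ =>
      Real.exp ((K n : ℝ) * Real.log ((n:ℝ) * Real.log n) / n)
        * ((m₃ n : ℝ) / ((m₀ n : ℝ) - n))) atTop (nhds (2/3)) := by
    have := hexp1.mul hb
    rwa [one_mul] at this
  have hftend : Tendsto f atTop (nhds (2/3)) :=
    tendsto_of_tendsto_of_tendsto_of_le_of_le' ha hg hflow hfup
  refine ⟨fun n => f n - 2/3, ?_, ?_⟩
  · have := hftend.sub_const (2/3)
    simpa using this
  · filter_upwards [eventually_ge_atTop 1] with n hn1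
    have hne : ((n:ℕ):ℝ) ≠ 0 := by positivity
    have : (2/3 + (f n - 2/3)) = f n := by ring
    rw [this]
    rw [hf]
    rw [← Real.rpow_natCast (S n ^ ((n:ℝ)⁻¹)) n, ← Real.rpow_mul (hS0 n),
      inv_mul_cancel₀ hne, Real.rpow_one]
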